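/- Let $k \geq 2$ and $1 \leq m \leq k-1$ be integers. Suppose the edges of the complete graph $K_n$ are colored with at most $c := n^{1/m}/(2(k-m)^{1/m})$ colors, and assume $n$ is large enough that the iterative neighborhood argument applies (in particular $(k-m)^{j/m} n^{1-j/m} \geq k-m$ for $j \leq m$). Then there exists a set of $k$ vertices spanning at most $\binom{k}{2} - m(k-m) - \binom{m}{2} + m$ distinct colors. -/

import Mathlib

open Finset

lemma sym2_image_card_le' {α : Type*} [DecidableEq α] (s : Finset α) :
    (s.offDiag.image Sym2.mk.uncurry).card ≤ s.card.choose 2 := by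
  have hsub : s.offDiag.image Sym2.mk.uncurry ⊆ s.sym2 \ (s.image Sym2.diag) := by
    intro e he
    simp only [mem_image] at he
    obtain ⟨⟨a0, b0⟩, hp, rfl⟩ := he
    have hpd := Finset.not_isDiag_mk_of_mem_offDiag hp
    rw [mem_sdiff]
    refine ⟨?_, ?_⟩
    · rw [Finset.mem_sym2_iff]
      intro a ha
      rcases mem_offDiag.1 hp with ⟨h1, h2, _⟩
      rcases Sym2.mem_iff.1 ha with rfl | rfl
      · exact h1
      · exact h2
    · intro hmem
      rcases mem_image.1 hmem with ⟨a, _, ha⟩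
      exact hpd ((show Sym2.diag a = s(a0, b0) from ha) ▸ Sym2.diag_isDiag a)
  have hdsub : s.image Sym2.diag ⊆ s.sym2 := by
    intro e he
    rcases mem_image.1 he with ⟨a, ha, rfl⟩
    exact Finset.diag_mem_sym2_iff.2 ha
  have h1 : (s.sym2 \ (s.image Sym2.diag)).card = s.sym2.card - (s.image Sym2.diag).card :=
    card_sdiff_of_subset hdsub
  have h2 : s.sym2.card = (s.card + 1).choose 2 := Finset.card_sym2 s
  have h3 : (s.image Sym2.diag).card = s.card :=
    card_image_of_injective _ Sym2.diag_injective
  have h4 : (s.card + 1).choose 2 = s.card + s.card.choose 2 := by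
    rw [Nat.choose_succ_succ]
    simp [Nat.choose_one_right]
  have := card_le_card hsub
  omega

lemma pigeon' {α β : Type*} [DecidableEq α] [Fintype β] [DecidableEq β]
    (s : Finset α) (f : α → β) (hb : 0 < Fintype.card β) :
    ∃ b : β, (s.card : ℝ) / Fintype.card β ≤ ((s.filter fun a => f a = b).card : ℝ) := by
  by_contra h
  push_neg at h
  have hne : (univ : Finset β).Nonempty := by
    rw [← Finset.card_pos]; simpa using hb
  have hsum : s.card = ∑ b : β, (s.filter fun a => f a = b).card :=
    card_eq_sum_card_fiberwise (fun a _ => mem_univ (f a))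
  have h1 : (s.card : ℝ) = ∑ b : β, ((s.filter fun a => f a = b).card : ℝ) := by
    exact_mod_cast hsum
  have h2 : ∑ b : β, ((s.filter fun a => f a = b).card : ℝ)
      < ∑ _b : β, (s.card : ℝ) / Fintype.card β :=
    Finset.sum_lt_sum_of_nonempty hne (fun b _ => h b)
  have h3 : ∑ _b : β, (s.card : ℝ) / Fintype.card β = s.card := by
    rw [Finset.sum_const, Finset.card_univ, nsmul_eq_mul]
    field_simp
  rw [h3] at h2
  linarith

lemma choose_two_split (a b : ℕ) : (a + b).choose 2 = a.choose 2 + a * b + b.choose 2 := by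
  induction b with
  | zero => simp
  | succ b ih =>
    have h1 : a + (b + 1) = (a + b) + 1 := by ring
    rw [h1, Nat.choose_succ_succ, Nat.choose_one_right, ih,
      Nat.choose_succ_succ, Nat.choose_one_right]
    ring

/-- If `K_n` is edge-colored with at most `n^(1/m) / (2 (k-m)^(1/m))` colors
(and `n` is large enough for the iterative neighborhood argument), then some `k` vertices span
at most `C(k,2) - m(k-m) - C(m,2) + m` distinct colors. -/
theorem few_colors_gives_cheap_clique (k m n : ℕ) (hk : 2 ≤ k) (hm1 : 1 ≤ m) (hm2 : m ≤ k - 1)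
    (hkn : k ≤ n)
    {C : Type*} [Fintype C] [DecidableEq C] (χ : Sym2 (Fin n) → C)
    (hc : (Fintype.card C : ℝ) ≤ (n : ℝ) ^ ((1 : ℝ) / m) / (2 * ((k - m : ℕ) : ℝ) ^ ((1 : ℝ) / m)))
    (hlarge : ∀ j ≤ m,
      ((k - m : ℕ) : ℝ) ≤ ((k - m : ℕ) : ℝ) ^ ((j : ℝ) / m) * (n : ℝ) ^ (1 - (j : ℝ) / m)) :
    ∃ S : Finset (Fin n), S.card = k ∧
      (S.offDiag.image fun p => χ s(p.1, p.2)).card ≤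
        k.choose 2 - m * (k - m) - m.choose 2 + m := by
  classical
  set q := k - m with hqdef
  have hq1 : 1 ≤ q := by omega
  have hn2 : 2 ≤ n := le_trans hk hkn
  have hmR : (0 : ℝ) < m := by exact_mod_cast hm1
  have hqR : (0 : ℝ) < q := by exact_mod_cast hq1
  have hqR1 : (1 : ℝ) ≤ q := by exact_mod_cast hq1
  have hnR : (0 : ℝ) < n := by positivity
  have hnR1 : (1 : ℝ) ≤ n := by exact_mod_cast le_trans (by omega : 1 ≤ k) hkn
  have hCne : Nonempty C := ⟨χ (Sym2.diag ⟨0, by omega⟩)⟩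
  have hCpos : 0 < Fintype.card C := Fintype.card_pos
  have hCR1 : (1 : ℝ) ≤ Fintype.card C := by exact_mod_cast hCpos
  have hX0 : (0 : ℝ) < (q : ℝ) ^ ((1 : ℝ) / m) := Real.rpow_pos_of_pos hqR _
  have hY0 : (0 : ℝ) < (n : ℝ) ^ ((1 : ℝ) / m) := Real.rpow_pos_of_pos hnR _
  have hX1 : (1 : ℝ) ≤ (q : ℝ) ^ ((1 : ℝ) / m) :=
    Real.one_le_rpow hqR1 (by positivity)
  -- rearranged color-count hypothesis
  have hCle : 2 * (q : ℝ) ^ ((1 : ℝ) / m) * Fintype.card C ≤ (n : ℝ) ^ ((1 : ℝ) / m) := by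
    rw [le_div_iff₀ (by positivity)] at hc
    linarith [hc]
  have hY2 : (2 : ℝ) ≤ (n : ℝ) ^ ((1 : ℝ) / m) := by nlinarith
  -- lower bound on the invariant while j < m
  have hBlow : ∀ j : ℕ, j < m →
      (2 : ℝ) ≤ (q : ℝ) ^ ((j : ℝ) / m) * (n : ℝ) ^ (1 - (j : ℝ) / m) := by
    intro j hj
    have h1 : (1 : ℝ) ≤ (q : ℝ) ^ ((j : ℝ) / m) :=
      Real.one_le_rpow hqR1 (by positivity)
    have hexp : (1 : ℝ) / m ≤ 1 - (j : ℝ) / m := by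
      have hjm : ((j : ℝ) + 1) ≤ m := by exact_mod_cast hj
      rw [le_sub_iff_add_le, ← add_div, div_le_one hmR]
      linarith
    have h2 : (n : ℝ) ^ ((1 : ℝ) / m) ≤ (n : ℝ) ^ (1 - (j : ℝ) / m) :=
      Real.rpow_le_rpow_of_exponent_le hnR1 hexp
    nlinarith
  -- the iterative construction
  have key : ∀ j, j ≤ m → ∃ (v : Fin j → Fin n) (c : Fin j → C) (A : Finset (Fin n)),
      Function.Injective v ∧ (∀ i, v i ∉ A) ∧
      (∀ i1 i2 : Fin j, i1 < i2 → χ s(v i1, v i2) = c i1) ∧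
      (∀ i, ∀ x ∈ A, χ s(v i, x) = c i) ∧
      (q : ℝ) ^ ((j : ℝ) / m) * (n : ℝ) ^ (1 - (j : ℝ) / m) ≤ A.card := by
    intro j
    induction j with
    | zero =>
      intro _
      refine ⟨Fin.elim0, Fin.elim0, univ, fun i => i.elim0, fun i => i.elim0,
        fun i => i.elim0, fun i => i.elim0, ?_⟩
      simp [Real.rpow_zero, Real.rpow_one, Finset.card_univ]
    | succ j ih =>
      intro hj1
      obtain ⟨v, c, A, hvinj, hvA, hvv, hvAc, hcard⟩ := ih (by omega)
      have hBj := hBlow j (by omega)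
      have hA2 : (2 : ℝ) ≤ A.card := le_trans hBj hcard
      have hA2' : 2 ≤ A.card := by exact_mod_cast hA2
      have hAne : A.Nonempty := card_pos.1 (by omega)
      obtain ⟨v0, hv0⟩ := hAne
      set s := A.erase v0 with hsdef
      obtain ⟨c0, hc0⟩ := pigeon' s (fun u => χ s(v0, u)) hCpos
      set A' := s.filter (fun u => χ s(v0, u) = c0) with hA'def
      have hA'sub : A' ⊆ A := (filter_subset _ _).trans (erase_subset _ _)
      have hv0A' : v0 ∉ A' := fun h => (notMem_erase v0 A) ((filter_subset _ _) h)
      refine ⟨Fin.snoc v v0, Fin.snoc c c0, A', ?_, ?_, ?_, ?_, ?_⟩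
      · -- injectivity
        intro a b hab
        induction a using Fin.lastCases with
        | last =>
          induction b using Fin.lastCases with
          | last => rfl
          | cast b =>
            rw [Fin.snoc_last, Fin.snoc_castSucc] at hab
            exact absurd (hab ▸ hv0) (hvA b)
        | cast a =>
          induction b using Fin.lastCases with
          | last =>
            rw [Fin.snoc_last, Fin.snoc_castSucc] at hab
            exact absurd (hab ▸ hv0) (hvA a)
          | cast b =>
            rw [Fin.snoc_castSucc, Fin.snoc_castSucc] at hab
            exact congrArg Fin.castSucc (hvinj hab)
      · -- not in A'
        intro i
        induction i using Fin.lastCases with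
        | last => rw [Fin.snoc_last]; exact hv0A'
        | cast i => rw [Fin.snoc_castSucc]; exact fun h => hvA i (hA'sub h)
      · -- edges among chosen vertices
        intro i1 i2 h12
        induction i2 using Fin.lastCases with
        | last =>
          induction i1 using Fin.lastCases with
          | last => exact absurd h12 (lt_irrefl _)
          | cast i1 =>
            rw [Fin.snoc_last, Fin.snoc_castSucc, Fin.snoc_castSucc]
            exact hvAc i1 v0 hv0
        | cast i2 =>
          induction i1 using Fin.lastCases with
          | last => exact absurd h12 (not_lt.2 (Fin.castSucc_lt_last i2).le)
          | cast i1 =>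
            rw [Fin.snoc_castSucc, Fin.snoc_castSucc, Fin.snoc_castSucc]
            exact hvv i1 i2 (Fin.castSucc_lt_castSucc_iff.1 h12)
      · -- edges to A'
        intro i x hx
        induction i using Fin.lastCases with
        | last =>
          rw [Fin.snoc_last, Fin.snoc_last]
          exact (mem_filter.1 hx).2
        | cast i =>
          rw [Fin.snoc_castSucc, Fin.snoc_castSucc]
          exact hvAc i x (hA'sub hx)
      · -- cardinality bound
        have hsRcard : (s.card : ℝ) = (A.card : ℝ) - 1 := by
          rw [hsdef, card_erase_of_mem hv0]
          have : 1 ≤ A.card := by omega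
          push_cast [Nat.cast_sub this]
          ring
        have hEq : (q : ℝ) ^ (((j + 1 : ℕ) : ℝ) / m) * (n : ℝ) ^ (1 - ((j + 1 : ℕ) : ℝ) / m)
            = ((q : ℝ) ^ ((j : ℝ) / m) * (n : ℝ) ^ (1 - (j : ℝ) / m))
              * ((q : ℝ) ^ ((1 : ℝ) / m) / (n : ℝ) ^ ((1 : ℝ) / m)) := by
          push_cast
          rw [show ((j : ℝ) + 1) / m = (j : ℝ) / m + 1 / m by ring,
            show (1 : ℝ) - ((j : ℝ) / m + 1 / m) = (1 - (j : ℝ) / m) - 1 / m by ring,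
            Real.rpow_add hqR, Real.rpow_sub hnR]
          ring
        rw [hEq]
        have hstep1 : ((q : ℝ) ^ ((j : ℝ) / m) * (n : ℝ) ^ (1 - (j : ℝ) / m))
              * ((q : ℝ) ^ ((1 : ℝ) / m) / (n : ℝ) ^ ((1 : ℝ) / m))
            ≤ (A.card : ℝ) * ((q : ℝ) ^ ((1 : ℝ) / m) / (n : ℝ) ^ ((1 : ℝ) / m)) := by
          apply mul_le_mul_of_nonneg_right hcard (by positivity)
        have hstep2 : (A.card : ℝ) * ((q : ℝ) ^ ((1 : ℝ) / m) / (n : ℝ) ^ ((1 : ℝ) / m))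
            ≤ ((A.card : ℝ) - 1) / Fintype.card C := by
          rw [← mul_div_assoc, div_le_div_iff₀ hY0 (by positivity)]
          nlinarith [hCle, hA2, hX0, hY0, hCR1]
        have hstep3 : ((A.card : ℝ) - 1) / Fintype.card C ≤ (A'.card : ℝ) := by
          rw [← hsRcard]
          exact hc0
        linarith
  -- assemble the final clique
  obtain ⟨v, c, A, hvinj, hvA, hvv, hvAc, hcard⟩ := key m le_rfl
  have hAq : q ≤ A.card := by
    have h1 : ((m : ℝ) / m) = 1 := div_self (ne_of_gt hmR)
    rw [h1, Real.rpow_one, sub_self, Real.rpow_zero, mul_one] at hcard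
    exact_mod_cast hcard
  obtain ⟨A', hA'sub, hA'card⟩ := Finset.exists_subset_card_eq hAq
  have hdisj : Disjoint A' (Finset.univ.image v) := by
    rw [Finset.disjoint_left]
    intro x hx hx'
    rcases mem_image.1 hx' with ⟨i, _, rfl⟩
    exact hvA i (hA'sub hx)
  refine ⟨A' ∪ Finset.univ.image v, ?_, ?_⟩
  · rw [card_union_of_disjoint hdisj, hA'card, card_image_of_injective _ hvinj,
      card_univ, Fintype.card_fin]
    omega
  · have hrhs : k.choose 2 - m * (k - m) - m.choose 2 + m = q.choose 2 + m := by
      simp only [← hqdef]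
      have h : k.choose 2 = m.choose 2 + m * q + q.choose 2 := by
        rw [show k = m + q by omega]
        exact choose_two_split m q
      omega
    rw [hrhs]
    set S := A' ∪ Finset.univ.image v with hSdef
    have hsub : (S.offDiag.image fun p => χ s(p.1, p.2))
        ⊆ (A'.offDiag.image fun p => χ s(p.1, p.2)) ∪ Finset.univ.image c := by
      intro x hx
      rcases mem_image.1 hx with ⟨p, hp, rfl⟩
      rcases mem_offDiag.1 hp with ⟨hp1, hp2, hpne⟩
      rw [mem_union]
      rcases mem_union.1 hp1 with h1 | h1 <;> rcases mem_union.1 hp2 with h2 | h2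
      · exact Or.inl (mem_image.2 ⟨p, mem_offDiag.2 ⟨h1, h2, hpne⟩, rfl⟩)
      · -- p.1 ∈ A', p.2 = v i
        rcases mem_image.1 h2 with ⟨i, _, hi⟩
        refine Or.inr (mem_image.2 ⟨i, mem_univ i, ?_⟩)
        rw [← hi, Sym2.eq_swap]
        exact (hvAc i p.1 (hA'sub h1)).symm
      · rcases mem_image.1 h1 with ⟨i, _, hi⟩
        refine Or.inr (mem_image.2 ⟨i, mem_univ i, ?_⟩)
        rw [← hi]
        exact (hvAc i p.2 (hA'sub h2)).symm
      · rcases mem_image.1 h1 with ⟨i1, _, hi1⟩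
        rcases mem_image.1 h2 with ⟨i2, _, hi2⟩
        rcases lt_trichotomy i1 i2 with h | h | h
        · refine Or.inr (mem_image.2 ⟨i1, mem_univ i1, ?_⟩)
          rw [← hi1, ← hi2]
          exact (hvv i1 i2 h).symm
        · exact absurd (hi1 ▸ hi2 ▸ congrArg v h) hpne
        · refine Or.inr (mem_image.2 ⟨i2, mem_univ i2, ?_⟩)
          rw [← hi1, ← hi2, Sym2.eq_swap]
          exact (hvv i2 i1 h).symm
    have h1 : (A'.offDiag.image fun p => χ s(p.1, p.2)).card ≤ q.choose 2 := by
      have heq : (A'.offDiag.image fun p => χ s(p.1, p.2))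
          = (A'.offDiag.image Sym2.mk.uncurry).image χ := by
        rw [Finset.image_image]
        rfl
      rw [heq]
      calc ((A'.offDiag.image Sym2.mk.uncurry).image χ).card
          ≤ (A'.offDiag.image Sym2.mk.uncurry).card := card_image_le
        _ ≤ A'.card.choose 2 := sym2_image_card_le' A'
        _ = q.choose 2 := by rw [hA'card]
    calc (S.offDiag.image fun p => χ s(p.1, p.2)).card
        ≤ ((A'.offDiag.image fun p => χ s(p.1, p.2)) ∪ Finset.univ.image c).card :=
          card_le_card hsub
      _ ≤ (A'.offDiag.image fun p => χ s(p.1, p.2)).card + (Finset.univ.image c).card :=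
          card_union_le _ _
      _ ≤ q.choose 2 + m := by
          have := (card_image_le (s := (univ : Finset (Fin m))) (f := c))
          simp only [card_univ, Fintype.card_fin] at this
          omega
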